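/- Let N ≥ 1, let P = {(a,b) : a, b ∈ Fin N, a < b} be the set of ordered index pairs, let ρ : P → ℝ satisfy |ρ(a,b)| < 1 for every (a,b) ∈ P, and let α : Fin N → ℝ. For s : P → ℕ and m ∈ Fin N set s_m = ∑_{(a,b) ∈ P, a = m or b = m} s(a,b). Then ∑_{s : P → ℕ} (∏_{(a,b) ∈ P} ρ(a,b)^{s(a,b)}) · ∏_{m} T_{s_m}(cos(α m)) = (1/2^N) · ∑_{ε : Fin N → {−1,1}} [∑_{S ⊆ P} (−1)^{|S|} (∏_{(a,b) ∈ S} ρ(a,b)) · cos(∑_{(a,b) ∈ S} ((ε a)(α a) + (ε b)(α b)))] / ∏_{(a,b) ∈ P} (1 − 2ρ(a,b)·cos((ε a)(α a) + (ε b)(α b)) + ρ(a,b)²), where ε runs over all sign vectors Fin N → {−1,1} and S over all subsets of P. -/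

import Mathlib

set_option maxHeartbeats 1000000

open Polynomial Finset Complex

section KSAux
variable {N : ℕ} {ρ : {p : Fin N × Fin N // p.1 < p.2} → ℝ}

private noncomputable def th {N : ℕ} (α : Fin N → ℝ) (ε : Fin N → ({-1, 1} : Finset ℤ))
    (p : {p : Fin N × Fin N // p.1 < p.2}) : ℝ :=
  ((ε p.1.1 : ℤ) : ℝ) * α p.1.1 + ((ε p.1.2 : ℤ) : ℝ) * α p.1.2

private noncomputable def xx {N : ℕ} (ρ : {p : Fin N × Fin N // p.1 < p.2} → ℝ)
    (α : Fin N → ℝ) (ε : Fin N → ({-1, 1} : Finset ℤ)) (p : {p : Fin N × Fin N // p.1 < p.2}) : ℂ :=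
  (ρ p : ℂ) * Complex.exp ((th α ε p : ℝ) * Complex.I)

private noncomputable def dd {N : ℕ} (ρ : {p : Fin N × Fin N // p.1 < p.2} → ℝ)
    (α : Fin N → ℝ) (ε : Fin N → ({-1, 1} : Finset ℤ)) (p : {p : Fin N × Fin N // p.1 < p.2}) : ℝ :=
  1 - 2 * ρ p * Real.cos (th α ε p) + ρ p ^ 2

private def negE {N : ℕ} (ε : Fin N → ({-1, 1} : Finset ℤ)) : Fin N → ({-1, 1} : Finset ℤ) :=
  fun m => ⟨-(ε m : ℤ), by
    have h := (ε m).2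
    simp only [Finset.mem_insert, Finset.mem_singleton] at h ⊢
    omega⟩

private lemma negE_invol {N : ℕ} : Function.Involutive (negE (N := N)) := by
  intro ε; funext m; apply Subtype.ext; simp [negE]

private lemma th_negE {N : ℕ} (α : Fin N → ℝ) (ε : Fin N → ({-1, 1} : Finset ℤ))
    (p : {p : Fin N × Fin N // p.1 < p.2}) : th α (negE ε) p = - th α ε p := by
  simp only [th, negE]
  push_cast
  ring

private lemma norm_xx {N : ℕ} (ρ : {p : Fin N × Fin N // p.1 < p.2} → ℝ)
    (α : Fin N → ℝ) (ε : Fin N → ({-1, 1} : Finset ℤ)) (p : {p : Fin N × Fin N // p.1 < p.2}) :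
    ‖xx ρ α ε p‖ = |ρ p| := by
  simp [xx, Complex.norm_exp_ofReal_mul_I]

private lemma dd_pos {N : ℕ} {ρ : {p : Fin N × Fin N // p.1 < p.2} → ℝ}
    (α : Fin N → ℝ) (ε : Fin N → ({-1, 1} : Finset ℤ)) (p : {p : Fin N × Fin N // p.1 < p.2})
    (hρ : |ρ p| < 1) : 0 < dd ρ α ε p := by
  have h1 := Real.neg_one_le_cos (th α ε p)
  have h2 := Real.cos_le_one (th α ε p)
  have h3 := abs_lt.1 hρ
  have h4 : ρ p * Real.cos (th α ε p) ≤ |ρ p| := by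
    nlinarith [le_abs_self (ρ p * Real.cos (th α ε p)), abs_mul (ρ p) (Real.cos (th α ε p)),
      Real.abs_cos_le_one (th α ε p), abs_nonneg (ρ p)]
  have h5 : (0:ℝ) < 1 - |ρ p| := by linarith
  unfold dd
  nlinarith [pow_pos h5 2, _root_.sq_abs (ρ p), h4]

private lemma one_sub_xx_inv {N : ℕ} {ρ : {p : Fin N × Fin N // p.1 < p.2} → ℝ}
    (α : Fin N → ℝ) (ε : Fin N → ({-1, 1} : Finset ℤ)) (p : {p : Fin N × Fin N // p.1 < p.2})
    (hρ : |ρ p| < 1) :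
    (1 - xx ρ α ε p)⁻¹
      = (1 - (ρ p : ℂ) * Complex.exp (-(th α ε p : ℝ) * Complex.I)) / (dd ρ α ε p : ℂ) := by
  have hd0 : (dd ρ α ε p : ℂ) ≠ 0 := by
    exact_mod_cast (dd_pos α ε p hρ).ne'
  have hprod : (1 - xx ρ α ε p) * (1 - (ρ p : ℂ) * Complex.exp (-(th α ε p : ℝ) * Complex.I))
      = (dd ρ α ε p : ℂ) := by
    have hexp : Complex.exp ((th α ε p : ℝ) * Complex.I)
        * Complex.exp (-(th α ε p : ℝ) * Complex.I) = 1 := by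
      rw [← Complex.exp_add]; ring_nf; exact Complex.exp_zero
    have hcos : (2:ℂ) * Complex.cos ((th α ε p : ℝ) : ℂ)
        = Complex.exp (((th α ε p : ℝ) : ℂ) * Complex.I)
          + Complex.exp (-((th α ε p : ℝ) : ℂ) * Complex.I) := Complex.two_cos _
    unfold xx dd
    push_cast
    linear_combination (ρ p : ℂ)^2 * hexp + (ρ p : ℂ) * hcos
  have h1x : (1 - xx ρ α ε p) ≠ 0 := by
    intro h
    rw [h, zero_mul] at hprod
    exact hd0 hprod.symm
  rw [eq_div_iff hd0, ← hprod, inv_mul_cancel_left₀ h1x]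

private theorem finPiHasSum : ∀ (n : ℕ) (f : Fin n → ℕ → ℂ),
    (∀ i, Summable fun k => ‖f i k‖) →
    (Summable fun s : Fin n → ℕ => ∏ i, ‖f i (s i)‖) ∧
      HasSum (fun s : Fin n → ℕ => ∏ i, f i (s i)) (∏ i, ∑' k, f i k) := by
  intro n
  induction n with
  | zero =>
    intro f _
    constructor
    · exact ((hasSum_single (f := fun s : Fin 0 → ℕ => ∏ i, ‖f i (s i)‖) default)
        (fun b hb => absurd (Subsingleton.elim b default) hb)).summable
    · have h := hasSum_single (f := fun s : Fin 0 → ℕ => ∏ i, f i (s i)) default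
        (fun b hb => absurd (Subsingleton.elim b default) hb)
      simpa using h
  | succ n ih =>
    intro f hf
    obtain ⟨ihS, ihH⟩ := ih (fun i => f i.succ) (fun i => hf i.succ)
    set e := (Fin.consEquiv (fun _ : Fin (n+1) => ℕ)).symm with he
    have hnorm : Summable fun z : ℕ × (Fin n → ℕ) => ‖f 0 z.1‖ * ∏ i, ‖f i.succ (z.2 i)‖ :=
      by apply Summable.mul_of_nonneg (hf 0) ihS (fun k => norm_nonneg _)
          (fun t => Finset.prod_nonneg fun i _ => norm_nonneg _)
    have ihS' : Summable fun t : Fin n → ℕ => ‖∏ i, f i.succ (t i)‖ := by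
      simpa [norm_prod] using ihS
    have hG : Summable fun z : ℕ × (Fin n → ℕ) => f 0 z.1 * ∏ i, f i.succ (z.2 i) :=
      by apply summable_mul_of_summable_norm (hf 0) ihS'
    have htsum : (∑' z : ℕ × (Fin n → ℕ), f 0 z.1 * ∏ i, f i.succ (z.2 i))
        = (∑' k, f 0 k) * (∑' t : Fin n → ℕ, ∏ i, f i.succ (t i)) :=
      by rw [tsum_mul_tsum_of_summable_norm (hf 0) ihS']
    have hfun : (fun s : Fin (n+1) → ℕ => ∏ i, f i (s i))
        = (fun z : ℕ × (Fin n → ℕ) => f 0 z.1 * ∏ i, f i.succ (z.2 i)) ∘ e := by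
      funext s
      simp [he, Fin.prod_univ_succ, Function.comp, Fin.tail]
    have hfunn : (fun s : Fin (n+1) → ℕ => ∏ i, ‖f i (s i)‖)
        = (fun z : ℕ × (Fin n → ℕ) => ‖f 0 z.1‖ * ∏ i, ‖f i.succ (z.2 i)‖) ∘ e := by
      funext s
      simp [he, Fin.prod_univ_succ, Function.comp, Fin.tail]
    constructor
    · rw [hfunn]
      exact (Equiv.summable_iff e).2 hnorm
    · rw [hfun, Fin.prod_univ_succ]
      apply (Equiv.hasSum_iff e).2
      have := hG.hasSum
      rw [htsum, ihH.tsum_eq] at this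
      exact this

private theorem piHasSum {ι : Type*} [Fintype ι] (f : ι → ℕ → ℂ)
    (hf : ∀ i, Summable fun k => ‖f i k‖) :
    HasSum (fun s : ι → ℕ => ∏ i, f i (s i)) (∏ i, ∑' k, f i k) := by
  classical
  obtain ⟨e⟩ : Nonempty (ι ≃ Fin (Fintype.card ι)) := ⟨Fintype.equivFin ι⟩
  have h := (finPiHasSum (Fintype.card ι) (fun j => f (e.symm j)) (fun j => hf _)).2
  have hfun : (fun s : ι → ℕ => ∏ i, f i (s i))
      = (fun t : Fin (Fintype.card ι) → ℕ => ∏ j, f (e.symm j) (t j))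
        ∘ (Equiv.arrowCongr e (Equiv.refl ℕ)) := by
    funext s
    simp only [Function.comp_apply, Equiv.arrowCongr_apply, Equiv.coe_refl,
      Function.comp, id_eq]
    exact (e.symm.prod_comp fun i => f i (s i)).symm
  have h2 : (∏ j, ∑' k, f (e.symm j) k) = ∏ i, ∑' k, f i k := e.symm.prod_comp (fun i => ∑' k, f i k)
  rw [hfun, ← h2]
  exact (Equiv.hasSum_iff _).2 h

private lemma hasSum_geom (hρ : ∀ p, |ρ p| < 1) (α : Fin N → ℝ)
    (ε : Fin N → ({-1, 1} : Finset ℤ)) :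
    HasSum (fun s : {p : Fin N × Fin N // p.1 < p.2} → ℕ => ∏ p, (xx ρ α ε p) ^ (s p))
      (∏ p, (1 - xx ρ α ε p)⁻¹) := by
  have h := piHasSum (fun p n => (xx ρ α ε p) ^ n) (fun p => by
    simp only [norm_pow, norm_xx]
    exact summable_geometric_of_lt_one (abs_nonneg _) (hρ p))
  have h2 : (∏ p, ∑' n : ℕ, (xx ρ α ε p) ^ n) = ∏ p, (1 - xx ρ α ε p)⁻¹ :=
    Finset.prod_congr rfl fun p _ =>
      tsum_geometric_of_norm_lt_one (by rw [norm_xx]; exact hρ p)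
  rwa [h2] at h

private lemma prod_inv_eq (α : Fin N → ℝ) (ε : Fin N → ({-1, 1} : Finset ℤ))
    (hρ : ∀ p, |ρ p| < 1) :
    ∏ p : {p : Fin N × Fin N // p.1 < p.2}, (1 - xx ρ α ε p)⁻¹
      = (∑ S : Finset {p : Fin N × Fin N // p.1 < p.2},
          (-1 : ℂ) ^ S.card * (∏ p ∈ S, (ρ p : ℂ))
            * Complex.exp (-((∑ p ∈ S, th α ε p : ℝ) : ℂ) * Complex.I))
        / ∏ p, (dd ρ α ε p : ℂ) := by
  classical
  rw [Finset.prod_congr rfl fun p _ => one_sub_xx_inv α ε p (hρ p), Finset.prod_div_distrib]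
  congr 1
  have h0 : ∀ p : {p : Fin N × Fin N // p.1 < p.2},
      (1 : ℂ) - (ρ p : ℂ) * Complex.exp (-(th α ε p : ℝ) * Complex.I)
        = -((ρ p : ℂ) * Complex.exp (-(th α ε p : ℝ) * Complex.I)) + 1 := fun p => by ring
  rw [Finset.prod_congr rfl fun p _ => h0 p,
    Fintype.prod_add (fun p => -((ρ p : ℂ) * Complex.exp (-(th α ε p : ℝ) * Complex.I)))
      (fun _ => (1 : ℂ))]
  apply Finset.sum_congr rfl
  intro S _
  simp only [Finset.prod_const_one, mul_one]
  have h1 : ∀ p ∈ S, -((ρ p : ℂ) * Complex.exp (-(th α ε p : ℝ) * Complex.I))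
      = (-1 : ℂ) * ((ρ p : ℂ) * Complex.exp (-(th α ε p : ℝ) * Complex.I)) := fun p _ => by ring
  rw [Finset.prod_congr rfl h1, Finset.prod_mul_distrib, Finset.prod_const,
    Finset.prod_mul_distrib]
  have h2 : (∏ p ∈ S, Complex.exp (-(th α ε p : ℝ) * Complex.I))
      = Complex.exp (-((∑ p ∈ S, th α ε p : ℝ) : ℂ) * Complex.I) := by
    rw [← Complex.exp_sum]
    congr 1
    push_cast
    rw [← Finset.sum_neg_distrib, Finset.sum_mul]
  rw [h2, mul_assoc]

private lemma sym_gen {ι κ : Type*} [Fintype ι] [Fintype κ] (neg : ι → ι)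
    (hneg : Function.Bijective neg) (c : κ → ℝ) (T : ι → κ → ℝ) (D : ι → ℂ)
    (hT : ∀ ε S, T (neg ε) S = - T ε S) (hD : ∀ ε, D (neg ε) = D ε) :
    ∑ ε, (∑ S, (c S : ℂ) * Complex.exp (-(T ε S : ℝ) * Complex.I)) / D ε
      = ∑ ε, ((∑ S, c S * Real.cos (T ε S) : ℝ) : ℂ) / D ε := by
  have key : ∀ ε, (∑ S, (c S : ℂ) * Complex.exp (-(T (neg ε) S : ℝ) * Complex.I))
      + (∑ S, (c S : ℂ) * Complex.exp (-(T ε S : ℝ) * Complex.I))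
      = 2 * ((∑ S, c S * Real.cos (T ε S) : ℝ) : ℂ) := by
    intro ε
    rw [← Finset.sum_add_distrib]
    push_cast
    rw [Finset.mul_sum]
    apply Finset.sum_congr rfl
    intro S _
    rw [hT]
    push_cast
    rw [neg_neg]
    have h2 := Complex.two_cos ((T ε S : ℝ) : ℂ)
    linear_combination -(c S : ℂ) * h2
  have hswap : (∑ ε, (∑ S, (c S : ℂ) * Complex.exp (-(T ε S : ℝ) * Complex.I)) / D ε)
      = ∑ ε, (∑ S, (c S : ℂ) * Complex.exp (-(T (neg ε) S : ℝ) * Complex.I)) / D (neg ε) :=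
    (Fintype.sum_bijective neg hneg _ _ (fun ε => rfl)).symm
  have h2 : (2 : ℂ) * ∑ ε, (∑ S, (c S : ℂ) * Complex.exp (-(T ε S : ℝ) * Complex.I)) / D ε
      = 2 * ∑ ε, ((∑ S, c S * Real.cos (T ε S) : ℝ) : ℂ) / D ε := by
    rw [two_mul]
    nth_rewrite 1 [hswap]
    rw [← Finset.sum_add_distrib]
    have : ∀ ε, (∑ S, (c S : ℂ) * Complex.exp (-(T (neg ε) S : ℝ) * Complex.I)) / D (neg ε)
        + (∑ S, (c S : ℂ) * Complex.exp (-(T ε S : ℝ) * Complex.I)) / D ε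
        = 2 * (((∑ S, c S * Real.cos (T ε S) : ℝ) : ℂ) / D ε) := by
      intro ε
      rw [hD, ← add_div, key, mul_div_assoc]
    rw [Finset.sum_congr rfl fun ε _ => this ε, ← Finset.mul_sum]
  exact mul_left_cancel₀ two_ne_zero h2

private lemma cos_expand (c : ℂ) :
    Complex.cos c = ∑ e : ({-1, 1} : Finset ℤ), (2 : ℂ)⁻¹ * Complex.exp ((e : ℤ) * c * Complex.I) := by
  rw [Finset.sum_coe_sort _ (fun z : ℤ => (2 : ℂ)⁻¹ * Complex.exp ((z : ℂ) * c * Complex.I))]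
  rw [show ({-1, 1} : Finset ℤ) = insert (-1) {1} from rfl,
    Finset.sum_insert (by norm_num), Finset.sum_singleton]
  push_cast
  rw [show ((-1 : ℂ)) * c * Complex.I = -c * Complex.I by ring,
    show ((1 : ℂ)) * c * Complex.I = c * Complex.I by ring]
  linear_combination Complex.two_cos c / 2

private lemma sum_swap_exp (α : Fin N → ℝ) (s : {p : Fin N × Fin N // p.1 < p.2} → ℕ)
    (ε : Fin N → ({-1, 1} : Finset ℤ)) :
    (∑ m : Fin N, ((ε m : ℤ) : ℂ)
        * (((∑ p : {p : Fin N × Fin N // p.1 < p.2},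
            if p.1.1 = m ∨ p.1.2 = m then s p else 0 : ℕ) : ℂ) * (α m : ℂ)) * Complex.I)
      = ∑ p : {p : Fin N × Fin N // p.1 < p.2}, (s p : ℂ) * ((th α ε p : ℝ) : ℂ) * Complex.I := by
  classical
  have h1 : ∀ m : Fin N, ((∑ p : {p : Fin N × Fin N // p.1 < p.2},
      if p.1.1 = m ∨ p.1.2 = m then s p else 0 : ℕ) : ℂ)
      = ∑ p : {p : Fin N × Fin N // p.1 < p.2},
          if p.1.1 = m ∨ p.1.2 = m then (s p : ℂ) else 0 := by
    intro m
    push_cast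
    rfl
  calc (∑ m : Fin N, ((ε m : ℤ) : ℂ)
        * (((∑ p : {p : Fin N × Fin N // p.1 < p.2},
            if p.1.1 = m ∨ p.1.2 = m then s p else 0 : ℕ) : ℂ) * (α m : ℂ)) * Complex.I)
      = ∑ m : Fin N, ∑ p : {p : Fin N × Fin N // p.1 < p.2},
          (if p.1.1 = m ∨ p.1.2 = m then ((ε m : ℤ) : ℂ) * ((s p : ℂ) * (α m : ℂ)) * Complex.I
           else 0) := by
        apply Finset.sum_congr rfl
        intro m _
        rw [h1, Finset.sum_mul, Finset.mul_sum, Finset.sum_mul]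
        apply Finset.sum_congr rfl
        intro p _
        split_ifs with h
        · ring
        · simp
    _ = ∑ p : {p : Fin N × Fin N // p.1 < p.2}, ∑ m : Fin N,
          (if p.1.1 = m ∨ p.1.2 = m then ((ε m : ℤ) : ℂ) * ((s p : ℂ) * (α m : ℂ)) * Complex.I
           else 0) := Finset.sum_comm
    _ = ∑ p : {p : Fin N × Fin N // p.1 < p.2}, (s p : ℂ) * ((th α ε p : ℝ) : ℂ) * Complex.I := by
        apply Finset.sum_congr rfl
        intro p _
        have hmem : ∀ m : Fin N, (p.1.1 = m ∨ p.1.2 = m) ↔ m ∈ ({p.1.1, p.1.2} : Finset (Fin N)) := by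
          intro m
          simp [Finset.mem_insert, Finset.mem_singleton, eq_comm]
        rw [Finset.sum_congr rfl (fun m _ => if_congr (hmem m) rfl rfl)]
        rw [Finset.sum_ite_mem, Finset.univ_inter, Finset.sum_pair (ne_of_lt p.2)]
        simp only [th]
        push_cast
        ring


private lemma pointwise (ρ : {p : Fin N × Fin N // p.1 < p.2} → ℝ) (α : Fin N → ℝ)
    (s : {p : Fin N × Fin N // p.1 < p.2} → ℕ) :
    ((((∏ p, ρ p ^ s p) * ∏ m : Fin N,
        Real.cos ((((∑ p : {p : Fin N × Fin N // p.1 < p.2},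
          if p.1.1 = m ∨ p.1.2 = m then s p else 0 : ℕ) : ℤ) : ℝ) * α m)) : ℝ) : ℂ)
      = ∑ ε : Fin N → ({-1, 1} : Finset ℤ), (2 : ℂ)⁻¹ ^ N * ∏ p, xx ρ α ε p ^ s p := by
  classical
  have hm : ∀ m : Fin N, ((Real.cos ((((∑ p : {p : Fin N × Fin N // p.1 < p.2},
      if p.1.1 = m ∨ p.1.2 = m then s p else 0 : ℕ) : ℤ) : ℝ) * α m) : ℝ) : ℂ)
      = ∑ e : ({-1, 1} : Finset ℤ), (2 : ℂ)⁻¹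
          * Complex.exp ((e : ℤ)
            * (((∑ p : {p : Fin N × Fin N // p.1 < p.2},
                if p.1.1 = m ∨ p.1.2 = m then s p else 0 : ℕ) : ℂ) * (α m : ℂ)) * Complex.I) := by
    intro m
    rw [Complex.ofReal_cos,
      show (((((∑ p : {p : Fin N × Fin N // p.1 < p.2},
          if p.1.1 = m ∨ p.1.2 = m then s p else 0 : ℕ) : ℤ) : ℝ) * α m : ℝ) : ℂ)
        = ((∑ p : {p : Fin N × Fin N // p.1 < p.2},
            if p.1.1 = m ∨ p.1.2 = m then s p else 0 : ℕ) : ℂ) * (α m : ℂ) by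
        push_cast [apply_ite ((↑) : ℝ → ℂ)]
        ring]
    exact cos_expand _
  rw [Complex.ofReal_mul, Complex.ofReal_prod, Complex.ofReal_prod,
    Finset.prod_congr rfl (fun m _ => hm m),
    Fintype.prod_sum (fun m (e : ({-1, 1} : Finset ℤ)) => (2 : ℂ)⁻¹
      * Complex.exp ((e : ℤ)
        * (((∑ p : {p : Fin N × Fin N // p.1 < p.2},
            if p.1.1 = m ∨ p.1.2 = m then s p else 0 : ℕ) : ℂ) * (α m : ℂ)) * Complex.I)),
    Finset.mul_sum]
  apply Finset.sum_congr rfl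
  intro ε _
  rw [Finset.prod_mul_distrib, Finset.prod_const, Finset.card_univ, Fintype.card_fin,
    ← Complex.exp_sum, sum_swap_exp α s ε, Complex.exp_sum,
    Finset.prod_congr rfl (fun p _ => show Complex.exp ((s p : ℂ) * ((th α ε p : ℝ) : ℂ) * Complex.I)
      = Complex.exp (((th α ε p : ℝ) : ℂ) * Complex.I) ^ (s p) by
        rw [mul_assoc, Complex.exp_nat_mul])]
  simp only [xx, mul_pow, Finset.prod_mul_distrib, Complex.ofReal_pow]
  ring

private lemma sum_th_negE (α : Fin N → ℝ) (ε : Fin N → ({-1, 1} : Finset ℤ))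
    (S : Finset {p : Fin N × Fin N // p.1 < p.2}) :
    (∑ p ∈ S, th α (negE ε) p) = -∑ p ∈ S, th α ε p := by
  rw [Finset.sum_congr rfl fun p _ => th_negE α ε p]
  rw [Finset.sum_neg_distrib]

private lemma dd_negE (α : Fin N → ℝ) (ε : Fin N → ({-1, 1} : Finset ℤ))
    (p : {p : Fin N × Fin N // p.1 < p.2}) : dd ρ α (negE ε) p = dd ρ α ε p := by
  unfold dd
  rw [th_negE, Real.cos_neg]

end KSAux

theorem kibble_slepian_chebyshev_T (N : ℕ) (hN : 1 ≤ N)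
    (ρ : {p : Fin N × Fin N // p.1 < p.2} → ℝ) (hρ : ∀ p, |ρ p| < 1) (α : Fin N → ℝ) :
    ∑' s : {p : Fin N × Fin N // p.1 < p.2} → ℕ,
        (∏ p, ρ p ^ s p) *
          ∏ m : Fin N,
            (Chebyshev.T ℝ
                ((∑ p : {p : Fin N × Fin N // p.1 < p.2},
                  if p.1.1 = m ∨ p.1.2 = m then s p else 0 : ℕ) : ℤ)).eval
              (Real.cos (α m)) =
      (1 / 2 ^ N) *
        ∑ ε : Fin N → ({-1, 1} : Finset ℤ),
          (∑ S : Finset {p : Fin N × Fin N // p.1 < p.2},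
              (-1 : ℝ) ^ S.card * (∏ p ∈ S, ρ p) *
                Real.cos (∑ p ∈ S,
                  (((ε p.1.1 : ℤ) : ℝ) * α p.1.1 + ((ε p.1.2 : ℤ) : ℝ) * α p.1.2))) /
            ∏ p : {p : Fin N × Fin N // p.1 < p.2},
              (1 - 2 * ρ p *
                  Real.cos (((ε p.1.1 : ℤ) : ℝ) * α p.1.1 + ((ε p.1.2 : ℤ) : ℝ) * α p.1.2) +
                ρ p ^ 2) := by
  classical
  simp only [Polynomial.Chebyshev.T_real_cos]
  refine HasSum.tsum_eq (Complex.hasSum_ofReal.mp ?_)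
  have hsummand : ∀ ε : Fin N → ({-1, 1} : Finset ℤ),
      Summable (fun s : {p : Fin N × Fin N // p.1 < p.2} → ℕ =>
        (2 : ℂ)⁻¹ ^ N * ∏ p, xx ρ α ε p ^ s p) :=
    fun ε => ((hasSum_geom hρ α ε).summable).mul_left _
  have hptw := pointwise ρ α
  have hsum : Summable (fun s : {p : Fin N × Fin N // p.1 < p.2} → ℕ =>
      ((((∏ p, ρ p ^ s p) * ∏ m : Fin N,
        Real.cos ((((∑ p : {p : Fin N × Fin N // p.1 < p.2},
          if p.1.1 = m ∨ p.1.2 = m then s p else 0 : ℕ) : ℤ) : ℝ) * α m)) : ℝ) : ℂ)) := by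
    simp only [hptw]
    exact summable_sum (fun ε _ => hsummand ε)
  have htsum : (∑' s : {p : Fin N × Fin N // p.1 < p.2} → ℕ,
      ((((∏ p, ρ p ^ s p) * ∏ m : Fin N,
        Real.cos ((((∑ p : {p : Fin N × Fin N // p.1 < p.2},
          if p.1.1 = m ∨ p.1.2 = m then s p else 0 : ℕ) : ℤ) : ℝ) * α m)) : ℝ) : ℂ))
      = (((1 / 2 ^ N) *
        ∑ ε : Fin N → ({-1, 1} : Finset ℤ),
          (∑ S : Finset {p : Fin N × Fin N // p.1 < p.2},
              (-1 : ℝ) ^ S.card * (∏ p ∈ S, ρ p) *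
                Real.cos (∑ p ∈ S,
                  (((ε p.1.1 : ℤ) : ℝ) * α p.1.1 + ((ε p.1.2 : ℤ) : ℝ) * α p.1.2))) /
            ∏ p : {p : Fin N × Fin N // p.1 < p.2},
              (1 - 2 * ρ p *
                  Real.cos (((ε p.1.1 : ℤ) : ℝ) * α p.1.1 + ((ε p.1.2 : ℤ) : ℝ) * α p.1.2) +
                ρ p ^ 2) : ℝ) : ℂ) := by
    calc (∑' s : {p : Fin N × Fin N // p.1 < p.2} → ℕ,
        ((((∏ p, ρ p ^ s p) * ∏ m : Fin N,
          Real.cos ((((∑ p : {p : Fin N × Fin N // p.1 < p.2},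
            if p.1.1 = m ∨ p.1.2 = m then s p else 0 : ℕ) : ℤ) : ℝ) * α m)) : ℝ) : ℂ))
        = ∑' s : {p : Fin N × Fin N // p.1 < p.2} → ℕ,
            ∑ ε : Fin N → ({-1, 1} : Finset ℤ), (2 : ℂ)⁻¹ ^ N * ∏ p, xx ρ α ε p ^ s p :=
          tsum_congr (fun s => hptw s)
      _ = ∑ ε : Fin N → ({-1, 1} : Finset ℤ),
            ∑' s : {p : Fin N × Fin N // p.1 < p.2} → ℕ,
              (2 : ℂ)⁻¹ ^ N * ∏ p, xx ρ α ε p ^ s p :=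
          Summable.tsum_finsetSum (fun ε _ => hsummand ε)
      _ = ∑ ε : Fin N → ({-1, 1} : Finset ℤ),
            (2 : ℂ)⁻¹ ^ N * ∏ p, (1 - xx ρ α ε p)⁻¹ :=
          Finset.sum_congr rfl (fun ε _ => by
            rw [tsum_mul_left, (hasSum_geom hρ α ε).tsum_eq])
      _ = ∑ ε : Fin N → ({-1, 1} : Finset ℤ),
            (2 : ℂ)⁻¹ ^ N *
              ((∑ S : Finset {p : Fin N × Fin N // p.1 < p.2},
                (((-1 : ℝ) ^ S.card * ∏ p ∈ S, ρ p : ℝ) : ℂ)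
                  * Complex.exp (-((∑ p ∈ S, th α ε p : ℝ) : ℂ) * Complex.I))
                / ∏ p, (dd ρ α ε p : ℂ)) := by
          refine Finset.sum_congr rfl fun ε _ => ?_
          rw [prod_inv_eq α ε hρ]
          congr 1
          refine congrArg₂ _ ?_ rfl
          refine Finset.sum_congr rfl fun S _ => ?_
          push_cast
          ring
      _ = (2 : ℂ)⁻¹ ^ N *
            ∑ ε : Fin N → ({-1, 1} : Finset ℤ),
              (∑ S : Finset {p : Fin N × Fin N // p.1 < p.2},
                (((-1 : ℝ) ^ S.card * ∏ p ∈ S, ρ p : ℝ) : ℂ)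
                  * Complex.exp (-((∑ p ∈ S, th α ε p : ℝ) : ℂ) * Complex.I))
                / ∏ p, (dd ρ α ε p : ℂ) := (Finset.mul_sum _ _ _).symm
      _ = (2 : ℂ)⁻¹ ^ N *
            ∑ ε : Fin N → ({-1, 1} : Finset ℤ),
              (((∑ S : Finset {p : Fin N × Fin N // p.1 < p.2},
                ((-1 : ℝ) ^ S.card * ∏ p ∈ S, ρ p) * Real.cos (∑ p ∈ S, th α ε p) : ℝ)) : ℂ)
                / ∏ p, (dd ρ α ε p : ℂ) := by
          rw [sym_gen negE negE_invol.bijective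
            (fun S : Finset {p : Fin N × Fin N // p.1 < p.2} => (-1 : ℝ) ^ S.card * ∏ p ∈ S, ρ p)
            (fun ε S => ∑ p ∈ S, th α ε p)
            (fun ε => ∏ p, (dd ρ α ε p : ℂ))
            (fun ε S => sum_th_negE α ε S)
            (fun ε => Finset.prod_congr rfl fun p _ => by rw [dd_negE])]
      _ = _ := by
          rw [Complex.ofReal_mul, Complex.ofReal_sum]
          congr 1
          · push_cast
            rw [one_div, inv_pow]
          · refine Finset.sum_congr rfl fun ε _ => ?_
            rw [Complex.ofReal_div]
            congr 1
            rw [Complex.ofReal_prod]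
            exact Finset.prod_congr rfl fun p _ => congrArg _ (by simp only [dd, th])
  have h2 := hsum.hasSum
  rwa [htsum] at h2
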